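/- Let d ∈ ℕ and let f : ℝ^d → ℝ be differentiable with L-Lipschitz gradient for some L > 0. Let γ > 0, x ∈ ℝ^d, g ∈ ℝ^d, and set x' = x − γ·g/‖g‖ if g ≠ 0 and x' = x if g = 0. Then f(x') ≤ f(x) − γ‖∇f(x)‖ + 2γ‖∇f(x) − g‖ + (L/2)·γ². -/

import Mathlib

open scoped Classical

open InnerProductSpace

lemma descent_lemma {F : Type*} [NormedAddCommGroup F] [InnerProductSpace ℝ F]
    [CompleteSpace F] (f : F → ℝ) (L : ℝ) (hL : 0 ≤ L)
    (hdiff : Differentiable ℝ f)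
    (hlip : ∀ x y, ‖gradient f x - gradient f y‖ ≤ L * ‖x - y‖)
    (x y : F) :
    f y ≤ f x + ⟪gradient f x, y - x⟫_ℝ + L / 2 * ‖y - x‖ ^ 2 := by
  set v := y - x with hv
  set φ : ℝ → ℝ := fun t => f (x + t • v) - t * ⟪gradient f x, v⟫_ℝ - L / 2 * t ^ 2 * ‖v‖ ^ 2
    with hφ
  have hline : ∀ t : ℝ, HasDerivAt (fun t : ℝ => x + t • v) v t := fun t =>
    by simpa using ((hasDerivAt_id t).smul_const v).const_add x
  have hder : ∀ t : ℝ, HasDerivAt φ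
      (⟪gradient f (x + t • v), v⟫_ℝ - ⟪gradient f x, v⟫_ℝ - L * t * ‖v‖ ^ 2) t := by
    intro t
    have h1 : HasDerivAt (fun t : ℝ => f (x + t • v)) ⟪gradient f (x + t • v), v⟫_ℝ t := by
      have := ((hdiff (x + t • v)).hasGradientAt.hasFDerivAt).comp_hasDerivAt t (hline t)
      exact this.congr_deriv (by simp)
    have h2 : HasDerivAt (fun t : ℝ => t * ⟪gradient f x, v⟫_ℝ) ⟪gradient f x, v⟫_ℝ t := by
      simpa using (hasDerivAt_id t).mul_const ⟪gradient f x, v⟫_ℝ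
    have h3 : HasDerivAt (fun t : ℝ => L / 2 * t ^ 2 * ‖v‖ ^ 2) (L * t * ‖v‖ ^ 2) t := by
      have := ((hasDerivAt_pow 2 t).const_mul (L / 2)).mul_const (‖v‖ ^ 2)
      refine this.congr_deriv ?_
      push_cast
      ring
    exact (h1.sub h2).sub h3
  have hanti : AntitoneOn φ (Set.Ici (0 : ℝ)) := by
    apply antitoneOn_of_deriv_nonpos (convex_Ici 0)
    · exact (fun t _ => (hder t).continuousAt.continuousWithinAt)
    · exact fun t _ => (hder t).differentiableAt.differentiableWithinAt
    · intro t ht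
      rw [interior_Ici] at ht
      rw [(hder t).deriv]
      have h1 : ⟪gradient f (x + t • v) - gradient f x, v⟫_ℝ
          ≤ ‖gradient f (x + t • v) - gradient f x‖ * ‖v‖ := real_inner_le_norm _ _
      have h2 : ‖gradient f (x + t • v) - gradient f x‖ ≤ L * (t * ‖v‖) := by
        have := hlip (x + t • v) x
        simpa [norm_smul, abs_of_nonneg (Set.mem_Ioi.mp ht).le, mul_assoc] using this
      have h3 : ⟪gradient f (x + t • v), v⟫_ℝ - ⟪gradient f x, v⟫_ℝ ≤ L * t * ‖v‖ ^ 2 := by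
        rw [← inner_sub_left]
        calc _ ≤ ‖gradient f (x + t • v) - gradient f x‖ * ‖v‖ := h1
        _ ≤ L * (t * ‖v‖) * ‖v‖ := by
            exact mul_le_mul_of_nonneg_right h2 (norm_nonneg _)
        _ = L * t * ‖v‖ ^ 2 := by ring
      linarith
  have := hanti (Set.self_mem_Ici) (Set.mem_Ici.2 zero_le_one) zero_le_one
  simp only [hφ, zero_smul, add_zero, zero_mul, one_smul, one_pow, zero_pow, mul_zero,
    sub_zero, one_mul, mul_one] at this
  have hxy : x + v = y := by rw [hv]; abel
  rw [hxy] at this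
  linarith


/-- Per-iteration descent inequality for the normalized server step: if `f` is
differentiable with `L`-Lipschitz gradient and `x' = x − γ·g/‖g‖` (with `x' = x`
when `g = 0`), then `f(x') ≤ f(x) − γ‖∇f(x)‖ + 2γ‖∇f(x) − g‖ + (L/2)γ²`. -/
theorem normalized_step_descent
    (d : ℕ) (f : EuclideanSpace ℝ (Fin d) → ℝ) (L : ℝ) (hL : 0 < L)
    (hdiff : Differentiable ℝ f)
    (hlip : ∀ x y, ‖gradient f x - gradient f y‖ ≤ L * ‖x - y‖)
    (γ : ℝ) (hγ : 0 < γ) (x g x' : EuclideanSpace ℝ (Fin d))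
    (hx' : x' = if g = 0 then x else x - γ • ‖g‖⁻¹ • g) :
    f x' ≤ f x - γ * ‖gradient f x‖ + 2 * γ * ‖gradient f x - g‖ + (L / 2) * γ ^ 2 := by
  by_cases hg : g = 0
  · subst hg
    rw [if_pos rfl] at hx'
    rw [hx', sub_zero]
    nlinarith [norm_nonneg (gradient f x), sq_nonneg γ]
  · rw [if_neg hg] at hx'
    have hgn : (0 : ℝ) < ‖g‖ := norm_pos_iff.2 hg
    have hvx : x' - x = -(γ • ‖g‖⁻¹ • g) := by rw [hx']; abel
    have hnorm : ‖x' - x‖ = γ := by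
      rw [hvx, norm_neg, norm_smul, norm_smul, norm_inv, norm_norm,
        Real.norm_of_nonneg hγ.le]
      field_simp
    have key := descent_lemma f L hL.le hdiff hlip x x'
    rw [hnorm] at key
    have hinner : ⟪gradient f x, x' - x⟫_ℝ = -(γ * (‖g‖⁻¹ * ⟪gradient f x, g⟫_ℝ)) := by
      rw [hvx, inner_neg_right, real_inner_smul_right, real_inner_smul_right]
    have hGg : ‖g‖ ^ 2 - ‖gradient f x - g‖ * ‖g‖ ≤ ⟪gradient f x, g⟫_ℝ := by
      have h1 : ⟪gradient f x, g⟫_ℝ = ⟪g, g⟫_ℝ + ⟪gradient f x - g, g⟫_ℝ := by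
        rw [← inner_add_left]
        congr 1
        abel
      have h2 : -(‖gradient f x - g‖ * ‖g‖) ≤ ⟪gradient f x - g, g⟫_ℝ :=
        neg_le_of_neg_le (by simpa using real_inner_le_norm (gradient f x - g) (-g))
      rw [h1, real_inner_self_eq_norm_sq]
      linarith
    have hIneq : ⟪gradient f x, x' - x⟫_ℝ ≤ -(γ * ‖g‖) + γ * ‖gradient f x - g‖ := by
      rw [hinner]
      have h3 : ‖g‖ - ‖gradient f x - g‖ ≤ ‖g‖⁻¹ * ⟪gradient f x, g⟫_ℝ := by
        have hmul := mul_le_mul_of_nonneg_left hGg (inv_nonneg.2 hgn.le)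
        have heq : ‖g‖⁻¹ * (‖g‖ ^ 2 - ‖gradient f x - g‖ * ‖g‖)
            = ‖g‖ - ‖gradient f x - g‖ := by field_simp
        rw [heq] at hmul
        exact hmul
      nlinarith [h3]
    have htri : ‖gradient f x‖ ≤ ‖g‖ + ‖gradient f x - g‖ := by
      have h := norm_add_le (gradient f x - g) g
      rw [sub_add_cancel] at h
      linarith
    calc f x' ≤ f x + ⟪gradient f x, x' - x⟫_ℝ + L / 2 * γ ^ 2 := key
      _ ≤ f x + (-(γ * ‖g‖) + γ * ‖gradient f x - g‖) + L / 2 * γ ^ 2 := by linarith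
      _ ≤ f x - γ * ‖gradient f x‖ + 2 * γ * ‖gradient f x - g‖ + (L / 2) * γ ^ 2 := by
          nlinarith [htri]
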